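/- Let L : X × G → U(K) be a strict representation (the identity L(x, g₁g₂) = L(x, g₁) ∘ L(g₁⁻¹•x, g₂) holds for all x ∈ X and all g₁, g₂ ∈ G), and let b : X × G → K be a strict L-cocycle (x ↦ b(x,g) is measurable for each g, and b(x, g₁g₂) = b(x, g₁) + L(x, g₁) b(g₁⁻¹•x, g₂) for all x ∈ X and all g₁, g₂ ∈ G). Assume that for every x ∈ X the set { b(x,g) : g ∈ G } is bounded in K. Then b is an L-coboundary: there exists a measurable ξ : X → K such that for every g ∈ G, b(x, g) = ξ(x) − L(x, g) ξ(g⁻¹•x) for μ-a.e. x. -/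

import Mathlib

open MeasureTheory Filter Topology
open scoped Pointwise symmDiff InnerProductSpace ENNReal

section Defs

variable (G : Type*) {X : Type*} [Group G] [MulAction G X] [MeasurableSpace X]

/-- The action of `G` on `X` is measurable and the measure `μ` is quasi-invariant:
for every `g`, the pushforward of `μ` under `x ↦ g • x` is equivalent to `μ`. -/
def QuasiInvariantAction (μ : Measure X) : Prop :=
  (∀ g : G, Measurable fun x : X => g • x) ∧
    ∀ g : G, μ.map (fun x : X => g • x) ≪ μ ∧ μ ≪ μ.map (fun x : X => g • x)

/-- Ergodicity of the action: every measurable `A` with `μ((g • A) ∆ A) = 0` for all `g`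
is null or conull. -/
def IsErgodicSMulAction (μ : Measure X) : Prop :=
  ∀ A : Set X, MeasurableSet A → (∀ g : G, μ ((g • A) ∆ A) = 0) → μ A = 0 ∨ μ A = 1

variable {G}
variable {K : Type*} [NormedAddCommGroup K] [InnerProductSpace ℂ K]
  [MeasurableSpace K] [BorelSpace K]

/-- A representation of the action groupoid `X ⋊ G` on the Hilbert space `K`. -/
def IsGroupoidRep (μ : Measure X) (L : X → G → (K ≃ₗᵢ[ℂ] K)) : Prop :=
  (∀ (g : G) (v : K), Measurable fun x : X => L x g v) ∧
    ∀ g₁ g₂ : G, ∀ᵐ x ∂μ, ∀ v : K, L x (g₁ * g₂) v = L x g₁ (L (g₁⁻¹ • x) g₂ v)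

/-- An `L`-cocycle. -/
def IsLCocycle (μ : Measure X) (L : X → G → (K ≃ₗᵢ[ℂ] K)) (b : X → G → K) : Prop :=
  (∀ g : G, Measurable fun x : X => b x g) ∧
    ∀ g₁ g₂ : G, ∀ᵐ x ∂μ, b x (g₁ * g₂) = b x g₁ + L x g₁ (b (g₁⁻¹ • x) g₂)

/-- An `L`-coboundary. -/
def IsLCoboundary (μ : Measure X) (L : X → G → (K ≃ₗᵢ[ℂ] K)) (b : X → G → K) : Prop :=
  ∃ ξ : X → K, Measurable ξ ∧ ∀ g : G, ∀ᵐ x ∂μ, b x g = ξ x - L x g (ξ (g⁻¹ • x))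

/-- A unit section: a measurable map `ξ : X → K` of norm one almost everywhere. -/
def IsUnitSection (μ : Measure X) (ξ : X → K) : Prop :=
  Measurable ξ ∧ ∀ᵐ x ∂μ, ‖ξ x‖ = 1

/-- The representation `L` has an invariant unit section. -/
def HasInvariantUnitSection (μ : Measure X) (L : X → G → (K ≃ₗᵢ[ℂ] K)) : Prop :=
  ∃ ξ : X → K, IsUnitSection μ ξ ∧ ∀ g : G, ∀ᵐ x ∂μ, L x g (ξ (g⁻¹ • x)) = ξ x

/-- The representation `L` almost has invariant unit sections. -/
def AlmostHasInvariantUnitSections (μ : Measure X) (L : X → G → (K ≃ₗᵢ[ℂ] K)) : Prop :=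
  ∃ ξ : ℕ → X → K, (∀ n, IsUnitSection μ (ξ n)) ∧
    ∀ g : G, ∀ᵐ x ∂μ,
      Tendsto (fun n => ‖L x g (ξ n (g⁻¹ • x)) - ξ n x‖) atTop (𝓝 0)

variable (G)

/-- Property (T) for the action of `G` on `(X, μ)`: every representation of `X ⋊ G`
on a separable complex Hilbert space that almost has invariant unit sections has an
invariant unit section. -/
def ActionHasPropertyT (μ : Measure X) : Prop :=
  ∀ (K : Type) [NormedAddCommGroup K] [InnerProductSpace ℂ K]
    [CompleteSpace K] [SecondCountableTopology K]
    [MeasurableSpace K] [BorelSpace K]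
    (L : X → G → (K ≃ₗᵢ[ℂ] K)),
    IsGroupoidRep μ L → AlmostHasInvariantUnitSections μ L → HasInvariantUnitSection μ L

end Defs


/-! ### Auxiliary machinery: Chebyshev centers of bounded cocycle orbits -/

set_option linter.unusedSectionVars false
set_option maxHeartbeats 1000000



section AuxCocycle

variable {G X K : Type*} [Group G] [NormedAddCommGroup K] [InnerProductSpace ℂ K]

/-- Rational convex coefficients on `G`. -/
def AuxS (G : Type*) [Group G] : Type _ :=
  {q : G →₀ ℚ // (∀ g, 0 ≤ q g) ∧ q.sum (fun _ r => r) = 1}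

instance [Countable G] : Countable (AuxS G) := by
  unfold AuxS; infer_instance

noncomputable def auxSingle (g : G) : AuxS G := by
  classical
  refine ⟨Finsupp.single g 1, fun h => ?_, ?_⟩
  · rw [Finsupp.single_apply]; split <;> norm_num
  · rw [Finsupp.sum_single_index]; rfl

instance : Nonempty (AuxS G) := ⟨auxSingle 1⟩

omit [Group G] in
lemma finsupp_sum_eq (p : G →₀ ℚ) {t : Finset G} (ht : p.support ⊆ t) :
    p.sum (fun _ r => r) = ∑ g ∈ t, p g := by
  rw [Finsupp.sum]
  refine Finset.sum_subset ht ?_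
  intro g _ hg
  simpa using Finsupp.notMem_support_iff.mp hg

/-- The convex combination of cocycle values with coefficients `q`. -/
noncomputable def auxV (b : X → G → K) (q : AuxS G) (x : X) : K :=
  q.1.sum fun g r => (r : ℝ) • b x g

lemma auxV_eq_sum (b : X → G → K) (q : AuxS G) (x : X) {t : Finset G}
    (ht : q.1.support ⊆ t) :
    auxV b q x = ∑ g ∈ t, ((q.1 g : ℝ)) • b x g := by
  rw [auxV, Finsupp.sum]
  refine Finset.sum_subset ht ?_
  intro g _ hg
  simp [Finsupp.notMem_support_iff.mp hg]

lemma auxV_single (b : X → G → K) (g : G) (x : X) :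
    auxV b (auxSingle g) x = b x g := by
  classical
  have : (auxSingle g : AuxS G).1 = Finsupp.single g 1 := rfl
  rw [auxV, this, Finsupp.sum_single_index] <;> simp

noncomputable def auxHalf (p : G →₀ ℚ) : G →₀ ℚ := p.mapRange (· / 2) (by norm_num)

omit [Group G] in
lemma auxHalf_support (p : G →₀ ℚ) : (auxHalf p).support ⊆ p.support :=
  Finsupp.support_mapRange

omit [Group G] in
lemma auxHalf_apply (p : G →₀ ℚ) (g : G) : auxHalf p g = p g / 2 := by
  rw [auxHalf, Finsupp.mapRange_apply]

/-- Midpoint of two coefficient systems. -/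
noncomputable def auxMid (q q' : AuxS G) : AuxS G := by
  classical
  refine ⟨auxHalf (q.1 + q'.1), fun g => ?_, ?_⟩
  · rw [auxHalf_apply]
    have := q.2.1 g; have := q'.2.1 g
    simp only [Finsupp.add_apply]
    positivity
  · have hsub : (auxHalf (q.1 + q'.1)).support ⊆ q.1.support ∪ q'.1.support :=
      subset_trans Finsupp.support_mapRange Finsupp.support_add
    rw [finsupp_sum_eq _ hsub]
    have h1 := finsupp_sum_eq q.1 (t := q.1.support ∪ q'.1.support)
      Finset.subset_union_left
    have h2 := finsupp_sum_eq q'.1 (t := q.1.support ∪ q'.1.support)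
      Finset.subset_union_right
    have : ∑ g ∈ q.1.support ∪ q'.1.support, auxHalf (q.1 + q'.1) g
        = (∑ g ∈ q.1.support ∪ q'.1.support, q.1 g
          + ∑ g ∈ q.1.support ∪ q'.1.support, q'.1 g) / 2 := by
      rw [← Finset.sum_add_distrib, Finset.sum_div]
      refine Finset.sum_congr rfl fun g _ => ?_
      rw [auxHalf_apply, Finsupp.add_apply]
    rw [this, ← h1, ← h2, q.2.2, q'.2.2]
    norm_num

lemma auxV_mid (b : X → G → K) (q q' : AuxS G) (x : X) :
    auxV b (auxMid q q') x = (2⁻¹ : ℝ) • (auxV b q x + auxV b q' x) := by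
  classical
  have hsub : (auxMid q q').1.support ⊆ q.1.support ∪ q'.1.support :=
    subset_trans (auxHalf_support _) Finsupp.support_add
  rw [auxV_eq_sum b (auxMid q q') x hsub,
    auxV_eq_sum b q x (t := q.1.support ∪ q'.1.support) Finset.subset_union_left,
    auxV_eq_sum b q' x (t := q.1.support ∪ q'.1.support) Finset.subset_union_right,
    ← Finset.sum_add_distrib, Finset.smul_sum]
  refine Finset.sum_congr rfl fun g _ => ?_
  have h : ((auxMid q q').1 g : ℝ) = ((q.1 g : ℝ) + (q'.1 g : ℝ)) / 2 := by
    show ((auxHalf (q.1 + q'.1)) g : ℝ) = _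
    rw [auxHalf_apply, Finsupp.add_apply]
    push_cast
    ring
  rw [h, smul_add, smul_smul, smul_smul, ← add_smul]
  congr 1
  ring

/-- Left-translation of coefficients. -/
noncomputable def auxTrans (g : G) (q : AuxS G) : AuxS G := by
  classical
  refine ⟨Finsupp.embDomain ⟨(g * ·), mul_right_injective g⟩ q.1, fun h => ?_, ?_⟩
  · by_cases hh : ∃ a, g * a = h
    · obtain ⟨a, rfl⟩ := hh
      rw [show ((g * a : G)) = (⟨(g * ·), mul_right_injective g⟩ : G ↪ G) a from rfl,
        Finsupp.embDomain_apply_self]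
      exact q.2.1 a
    · have h0 : (Finsupp.embDomain ⟨(g * ·), mul_right_injective g⟩ q.1) h = 0 :=
        Finsupp.embDomain_notin_range _ _ h (by rintro ⟨a, ha⟩; exact hh ⟨a, ha⟩)
      rw [h0]
  · rw [Finsupp.sum_embDomain]
    exact q.2.2

lemma auxTrans_apply (g : G) (q : AuxS G) (a : G) :
    (auxTrans g q).1 (g * a) = q.1 a := by
  rw [show ((g * a : G)) = (⟨(g * ·), mul_right_injective g⟩ : G ↪ G) a from rfl]
  exact Finsupp.embDomain_apply_self _ _ _

lemma auxTrans_surj (g : G) : Function.Surjective (auxTrans (G := G) g) := by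
  intro q'
  refine ⟨auxTrans g⁻¹ q', ?_⟩
  apply Subtype.ext
  ext h
  have h1 : g * (g⁻¹ * h) = h := by group
  calc (auxTrans g (auxTrans g⁻¹ q')).1 h
      = (auxTrans g (auxTrans g⁻¹ q')).1 (g * (g⁻¹ * h)) := by rw [h1]
    _ = (auxTrans g⁻¹ q').1 (g⁻¹ * h) := auxTrans_apply _ _ _
    _ = q'.1 h := auxTrans_apply _ _ _

end AuxCocycle

section Phi
variable {G X K : Type*} [Group G] [NormedAddCommGroup K] [InnerProductSpace ℂ K]

noncomputable def auxPhi (b : X → G → K) (x : X) (u : K) : ℝ :=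
  ⨆ g : G, ‖u - b x g‖

noncomputable def auxR (b : X → G → K) (x : X) : ℝ :=
  ⨅ q : AuxS G, auxPhi b x (auxV b q x)

variable (b : X → G → K)

lemma auxPhi_bdd (x : X) (hx : ∃ C, ∀ g, ‖b x g‖ ≤ C) (u : K) :
    BddAbove (Set.range fun g : G => ‖u - b x g‖) := by
  obtain ⟨C, hC⟩ := hx
  refine ⟨‖u‖ + C, ?_⟩
  rintro _ ⟨g, rfl⟩
  calc ‖u - b x g‖ ≤ ‖u‖ + ‖b x g‖ := norm_sub_le _ _
    _ ≤ ‖u‖ + C := by linarith [hC g]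

lemma le_auxPhi (x : X) (hx : ∃ C, ∀ g, ‖b x g‖ ≤ C) (u : K) (g : G) :
    ‖u - b x g‖ ≤ auxPhi b x u :=
  le_ciSup (auxPhi_bdd b x hx u) g

lemma auxPhi_le (x : X) (u : K) {c : ℝ} (h : ∀ g, ‖u - b x g‖ ≤ c) :
    auxPhi b x u ≤ c :=
  ciSup_le h

lemma auxPhi_nonneg (x : X) (u : K) : 0 ≤ auxPhi b x u :=
  Real.iSup_nonneg fun _ => norm_nonneg _

lemma auxPhi_lip (x : X) (hx : ∃ C, ∀ g, ‖b x g‖ ≤ C) (u u' : K) :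
    auxPhi b x u ≤ auxPhi b x u' + ‖u - u'‖ := by
  refine ciSup_le fun g => ?_
  have h : u - b x g = (u' - b x g) + (u - u') := by abel
  calc ‖u - b x g‖ ≤ ‖u' - b x g‖ + ‖u - u'‖ := by rw [h]; exact norm_add_le _ _
    _ ≤ _ := by have := le_auxPhi b x hx u' g; linarith

lemma auxPhi_abs_sub (x : X) (hx : ∃ C, ∀ g, ‖b x g‖ ≤ C) (u u' : K) :
    |auxPhi b x u - auxPhi b x u'| ≤ ‖u - u'‖ := by
  rw [abs_sub_le_iff]
  constructor
  · have := auxPhi_lip b x hx u u'; linarith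
  · have := auxPhi_lip b x hx u' u
    rw [norm_sub_rev] at this; linarith

lemma auxR_le (x : X) (q : AuxS G) : auxR b x ≤ auxPhi b x (auxV b q x) :=
  ciInf_le ⟨0, by rintro _ ⟨q', rfl⟩; exact auxPhi_nonneg b x _⟩ q

lemma auxR_nonneg (x : X) : 0 ≤ auxR b x :=
  le_ciInf fun _ => auxPhi_nonneg b x _

lemma auxPhi_tendsto (x : X) (hx : ∃ C, ∀ g, ‖b x g‖ ≤ C) {f : ℕ → K} {l : K}
    (hf : Tendsto f atTop (𝓝 l)) :
    Tendsto (fun m => auxPhi b x (f m)) atTop (𝓝 (auxPhi b x l)) := by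
  rw [tendsto_iff_dist_tendsto_zero]
  have hnorm : Tendsto (fun m => ‖f m - l‖) atTop (𝓝 0) :=
    tendsto_iff_norm_sub_tendsto_zero.mp hf
  refine squeeze_zero (fun m => dist_nonneg) (fun m => ?_) hnorm
  rw [Real.dist_eq]
  exact auxPhi_abs_sub b x hx _ _

variable [MulAction G X] (L : X → G → (K ≃ₗᵢ[ℂ] K))
variable (hbcoc : ∀ (x : X) (g₁ g₂ : G), b x (g₁ * g₂) = b x g₁ + L x g₁ (b (g₁⁻¹ • x) g₂))

include hbcoc in
lemma auxPhi_equivariant (x : X) (g : G) (w : K) :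
    auxPhi b x (b x g + L x g w) = auxPhi b (g⁻¹ • x) w := by
  have key : ∀ k : G, ‖(b x g + L x g w) - b x (g * k)‖ = ‖w - b (g⁻¹ • x) k‖ := by
    intro k
    rw [hbcoc x g k]
    have h2 : b x g + L x g w - (b x g + L x g (b (g⁻¹ • x) k))
        = L x g (w - b (g⁻¹ • x) k) := by
      rw [map_sub]; abel
    rw [h2, (L x g).norm_map]
  have hr : (Set.range fun h => ‖(b x g + L x g w) - b x h‖)
      = Set.range fun k => ‖w - b (g⁻¹ • x) k‖ := by
    ext r
    constructor
    · rintro ⟨h, rfl⟩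
      refine ⟨g⁻¹ * h, ?_⟩
      show ‖w - b (g⁻¹ • x) (g⁻¹ * h)‖ = ‖(b x g + L x g w) - b x h‖
      rw [← key (g⁻¹ * h), mul_inv_cancel_left]
    · rintro ⟨k, rfl⟩
      exact ⟨g * k, by simpa using key k⟩
  show sSup _ = sSup _
  rw [hr]

include hbcoc in
lemma auxV_trans (g : G) (q : AuxS G) (x : X) :
    b x g + L x g (auxV b q (g⁻¹ • x)) = auxV b (auxTrans g q) x := by
  classical
  have hsupp : (auxTrans g q).1.support
      = q.1.support.map ⟨(g * ·), mul_right_injective g⟩ :=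
    Finsupp.support_embDomain _ _
  rw [auxV_eq_sum b (auxTrans g q) x (le_of_eq hsupp), Finset.sum_map]
  have hterm : ∀ a ∈ q.1.support,
      ((auxTrans g q).1 ((⟨(g * ·), mul_right_injective g⟩ : G ↪ G) a) : ℝ)
        • b x ((⟨(g * ·), mul_right_injective g⟩ : G ↪ G) a)
      = (q.1 a : ℝ) • b x g + (q.1 a : ℝ) • L x g (b (g⁻¹ • x) a) := by
    intro a _
    have h1 : ((⟨(g * ·), mul_right_injective g⟩ : G ↪ G) a) = g * a := rfl
    rw [h1, auxTrans_apply, hbcoc x g a, smul_add]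
  rw [Finset.sum_congr rfl hterm, Finset.sum_add_distrib]
  congr 1
  · have h := q.2.2
    rw [finsupp_sum_eq q.1 (le_refl _)] at h
    rw [← Finset.sum_smul, ← Rat.cast_sum, h, Rat.cast_one, one_smul]
  · rw [auxV_eq_sum b q (g⁻¹ • x) (le_refl _), map_sum]
    refine Finset.sum_congr rfl fun a _ => ?_
    rw [← Complex.coe_smul, LinearIsometryEquiv.map_smul, Complex.coe_smul]

include hbcoc in
lemma auxR_equivariant (x : X) (g : G) :
    auxR b (g⁻¹ • x) = auxR b x := by
  have h1 : ∀ q : AuxS G,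
      auxPhi b (g⁻¹ • x) (auxV b q (g⁻¹ • x)) = auxPhi b x (auxV b (auxTrans g q) x) := by
    intro q
    rw [← auxV_trans b L hbcoc g q x, auxPhi_equivariant b L hbcoc x g _]
  have h2 : (Set.range fun q : AuxS G => auxPhi b (g⁻¹ • x) (auxV b q (g⁻¹ • x)))
      = Set.range fun q : AuxS G => auxPhi b x (auxV b q x) := by
    ext r
    constructor
    · rintro ⟨q, rfl⟩
      exact ⟨auxTrans g q, (h1 q).symm⟩
    · rintro ⟨q, rfl⟩
      obtain ⟨q', rfl⟩ := auxTrans_surj g q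
      exact ⟨q', h1 q'⟩
  show sInf _ = sInf _
  rw [h2]

end Phi

section Key
variable {G X K : Type*} [Group G] [NormedAddCommGroup K] [InnerProductSpace ℂ K]

lemma aux_key (b : X → G → K) (x : X) (hx : ∃ C, ∀ g, ‖b x g‖ ≤ C) (u u' : K)
    (hmid : auxR b x ≤ auxPhi b x ((2⁻¹ : ℝ) • (u + u'))) :
    ‖u - u'‖ ^ 2 ≤ 2 * (auxPhi b x u) ^ 2 + 2 * (auxPhi b x u') ^ 2
      - 4 * (auxR b x) ^ 2 := by
  set m : K := (2⁻¹ : ℝ) • (u + u') with hm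
  set c : ℝ := (2 * (auxPhi b x u) ^ 2 + 2 * (auxPhi b x u') ^ 2 - ‖u - u'‖ ^ 2) / 4
    with hc
  have hpar : ∀ g : G,
      4 * ‖m - b x g‖ ^ 2 + ‖u - u'‖ ^ 2
        = 2 * ‖u - b x g‖ ^ 2 + 2 * ‖u' - b x g‖ ^ 2 := by
    intro g
    have hp := parallelogram_law_with_norm ℂ (u - b x g) (u' - b x g)
    have h1 : (u - b x g) + (u' - b x g) = (2 : ℝ) • (m - b x g) := by
      rw [hm]; module
    have h2 : (u - b x g) - (u' - b x g) = u - u' := by abel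
    rw [h1, h2, norm_smul] at hp
    have h3 : ‖(2 : ℝ)‖ = 2 := by norm_num
    rw [h3] at hp
    nlinarith [hp]
  have hg : ∀ g : G, ‖m - b x g‖ ^ 2 ≤ c := by
    intro g
    have h1 := le_auxPhi b x hx u g
    have h2 := le_auxPhi b x hx u' g
    have h3 := hpar g
    have hn1 : (0:ℝ) ≤ ‖u - b x g‖ := norm_nonneg _
    have hn2 : (0:ℝ) ≤ ‖u' - b x g‖ := norm_nonneg _
    rw [hc]
    nlinarith
  have hc0 : (0:ℝ) ≤ c := le_trans (sq_nonneg _) (hg 1)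
  have hΦm : auxPhi b x m ≤ Real.sqrt c := by
    refine auxPhi_le b x m fun g => ?_
    exact (Real.le_sqrt (norm_nonneg _) hc0).mpr (hg g)
  have hR : auxR b x ≤ Real.sqrt c := le_trans hmid hΦm
  have hR2 : (auxR b x) ^ 2 ≤ c := (Real.le_sqrt (auxR_nonneg b x) hc0).mp hR
  rw [hc] at hR2
  linarith

end Key

theorem strict_bounded_cocycle_is_coboundary'
    {G X : Type*} [Group G] [Countable G]
    [MeasurableSpace X] [StandardBorelSpace X] [MulAction G X]
    (μ : MeasureTheory.Measure X) [MeasureTheory.IsProbabilityMeasure μ]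
    {K : Type*} [NormedAddCommGroup K] [InnerProductSpace ℂ K]
    [CompleteSpace K] [SecondCountableTopology K] [MeasurableSpace K] [BorelSpace K]
    (L : X → G → (K ≃ₗᵢ[ℂ] K))
    (b : X → G → K)
    (hbmeas : ∀ g : G, Measurable fun x : X => b x g)
    (hbcoc : ∀ (x : X) (g₁ g₂ : G),
      b x (g₁ * g₂) = b x g₁ + L x g₁ (b (g₁⁻¹ • x) g₂))
    (hbound : ∀ x : X, ∃ C : ℝ, ∀ g : G, ‖b x g‖ ≤ C) :
    ∃ ξ : X → K, Measurable ξ ∧ ∀ g : G, ∀ x : X, b x g = ξ x - L x g (ξ (g⁻¹ • x)) := by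
  classical
  obtain ⟨e, he⟩ := exists_surjective_nat (AuxS G)
  have hVmeas : ∀ q : AuxS G, Measurable fun x => auxV b q x := by
    intro q
    have h : (fun x => auxV b q x) = fun x => ∑ g ∈ q.1.support, ((q.1 g : ℝ)) • b x g := by
      funext x; exact auxV_eq_sum b q x (le_refl _)
    rw [h]
    exact Finset.measurable_sum _ fun g _ => (hbmeas g).const_smul _
  have hΦmeas : ∀ w : X → K, Measurable w → Measurable fun x => auxPhi b x (w x) := by
    intro w hw
    apply measurable_of_Iic
    intro c
    have h : (fun x => auxPhi b x (w x)) ⁻¹' Set.Iic c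
        = ⋂ g : G, {x | ‖w x - b x g‖ ≤ c} := by
      ext x
      simp only [Set.mem_preimage, Set.mem_Iic, Set.mem_iInter, Set.mem_setOf_eq]
      exact ciSup_le_iff (auxPhi_bdd b x (hbound x) (w x))
    rw [h]
    exact MeasurableSet.iInter fun g =>
      measurableSet_le ((hw.sub (hbmeas g)).norm) measurable_const
  have hRmeas : Measurable (auxR b) := by
    apply measurable_of_Iio
    intro c
    have h : auxR b ⁻¹' Set.Iio c = ⋃ q : AuxS G, {x | auxPhi b x (auxV b q x) < c} := by
      ext x
      simp only [Set.mem_preimage, Set.mem_Iio, Set.mem_iUnion, Set.mem_setOf_eq]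
      constructor
      · exact fun h => exists_lt_of_ciInf_lt h
      · rintro ⟨q, hq⟩
        exact lt_of_le_of_lt (auxR_le b x q) hq
    rw [h]
    exact MeasurableSet.iUnion fun q =>
      measurableSet_lt (hΦmeas _ (hVmeas q)) measurable_const
  have hex : ∀ (m : ℕ) (x : X), ∃ n : ℕ,
      auxPhi b x (auxV b (e n) x) < auxR b x + 1 / (m + 1) := by
    intro m x
    have hpos : (0:ℝ) < 1 / (m + 1) := by positivity
    have hlt : auxR b x < auxR b x + 1 / (m + 1) := by linarith
    obtain ⟨q, hq⟩ := exists_lt_of_ciInf_lt hlt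
    obtain ⟨n, rfl⟩ := he q
    exact ⟨n, hq⟩
  have hNmeas : ∀ m : ℕ, Measurable fun x => Nat.find (hex m x) := by
    intro m
    apply measurable_find
    intro k
    exact measurableSet_lt (hΦmeas _ (hVmeas (e k))) (hRmeas.add_const _)
  set ξseq : ℕ → X → K := fun m x => auxV b (e (Nat.find (hex m x))) x with hξseq
  have hξseqmeas : ∀ m, Measurable (ξseq m) := by
    intro m
    have h1 : Measurable fun p : X × ℕ => auxV b (e p.2) p.1 :=
      measurable_from_prod_countable_left fun n => hVmeas (e n)
    have h2 : Measurable fun x : X => (x, Nat.find (hex m x)) :=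
      measurable_id.prodMk (hNmeas m)
    have h3 : ξseq m = fun x => (fun p : X × ℕ => auxV b (e p.2) p.1) (x, Nat.find (hex m x)) := rfl
    rw [h3]
    exact h1.comp h2
  have hΦξ_lt : ∀ (m : ℕ) (x : X), auxPhi b x (ξseq m x) < auxR b x + 1 / (m + 1) :=
    fun m x => Nat.find_spec (hex m x)
  have hRleΦ : ∀ (x : X) (q : AuxS G), auxR b x ≤ auxPhi b x (auxV b q x) := auxR_le b
  have hRleΦξ : ∀ (m : ℕ) (x : X), auxR b x ≤ auxPhi b x (ξseq m x) :=
    fun m x => hRleΦ x _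
  have hkey : ∀ (x : X) (u u' : K), auxR b x ≤ auxPhi b x ((2⁻¹:ℝ) • (u + u')) →
      ‖u - u'‖ ^ 2 ≤ 2 * (auxPhi b x u) ^ 2 + 2 * (auxPhi b x u') ^ 2
        - 4 * (auxR b x) ^ 2 :=
    fun x => aux_key b x (hbound x)
  have hδmono : ∀ (M k : ℕ), M ≤ k → (1:ℝ) / (k + 1) ≤ 1 / (M + 1) := by
    intro M k hk
    apply one_div_le_one_div_of_le
    · positivity
    · exact add_le_add_left (Nat.cast_le.mpr hk) 1
  have hδle1 : ∀ M : ℕ, (1:ℝ) / (M + 1) ≤ 1 := by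
    intro M
    rw [div_le_one (by positivity)]
    push_cast; linarith
  have hdist : ∀ (x : X) (M m m' : ℕ), M ≤ m → M ≤ m' →
      ‖ξseq m x - ξseq m' x‖ ^ 2 ≤ (8 * auxR b x + 4) * (1 / (M + 1)) := by
    intro x M m m' hm hm'
    have hmid : (2⁻¹:ℝ) • (ξseq m x + ξseq m' x)
        = auxV b (auxMid (e (Nat.find (hex m x))) (e (Nat.find (hex m' x)))) x := by
      rw [auxV_mid]
    have h0 := hkey x (ξseq m x) (ξseq m' x) (by rw [hmid]; exact hRleΦ x _)
    have h1 := hΦξ_lt m x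
    have h2 := hΦξ_lt m' x
    have h3 := hδmono M m hm
    have h4 := hδmono M m' hm'
    have h5 := hRleΦξ m x
    have h6 := hRleΦξ m' x
    have h7 := auxR_nonneg b x
    have h8 := hδle1 M
    have h9 : (0:ℝ) < 1 / (M + 1) := by positivity
    nlinarith [sq_nonneg (auxPhi b x (ξseq m x) - auxR b x),
      sq_nonneg (auxPhi b x (ξseq m' x) - auxR b x)]
  have hcauchy : ∀ x : X, CauchySeq fun m => ξseq m x := by
    intro x
    refine cauchySeq_of_le_tendsto_0
      (fun M => Real.sqrt ((8 * auxR b x + 4) * (1 / (M + 1)))) ?_ ?_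
    · intro n m N hn hm
      rw [dist_eq_norm]
      have h := hdist x N n m hn hm
      have h2 : ‖ξseq n x - ξseq m x‖ = Real.sqrt (‖ξseq n x - ξseq m x‖ ^ 2) :=
        (Real.sqrt_sq (norm_nonneg _)).symm
      rw [h2]
      exact Real.sqrt_le_sqrt h
    · have h1 : Tendsto (fun M : ℕ => (8 * auxR b x + 4) * (1 / (M + 1 : ℝ)))
          atTop (𝓝 0) := by
        have := tendsto_one_div_add_atTop_nhds_zero_nat.const_mul (8 * auxR b x + 4)
        simpa using this
      have h2 := (Real.continuous_sqrt.tendsto 0).comp h1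
      simpa [Function.comp_def] using h2
  have hlim : ∀ x : X, ∃ l, Tendsto (fun m => ξseq m x) atTop (𝓝 l) :=
    fun x => cauchySeq_tendsto_of_complete (hcauchy x)
  refine ⟨fun x => (hlim x).choose, ?_, ?_⟩
  · exact measurable_of_tendsto_metrizable hξseqmeas
      (tendsto_pi_nhds.mpr fun x => (hlim x).choose_spec)
  intro g x
  set ξ : X → K := fun x => (hlim x).choose with hξ
  have htend : ∀ x, Tendsto (fun m => ξseq m x) atTop (𝓝 (ξ x)) :=
    fun x => (hlim x).choose_spec
  set y := g⁻¹ • x with hy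
  have hΦR : ∀ z : X, auxPhi b z (ξ z) = auxR b z := by
    intro z
    have hA := auxPhi_tendsto b z (hbound z) (htend z)
    have hge : auxR b z ≤ auxPhi b z (ξ z) := ge_of_tendsto' hA fun m => hRleΦξ m z
    have hB : Tendsto (fun m : ℕ => auxR b z + 1 / (m + 1 : ℝ)) atTop (𝓝 (auxR b z)) := by
      have h := Filter.Tendsto.const_add (auxR b z) tendsto_one_div_add_atTop_nhds_zero_nat
      simpa using h
    have hle : auxPhi b z (ξ z) ≤ auxR b z :=
      le_of_tendsto_of_tendsto hA hB (Filter.Eventually.of_forall fun m => (hΦξ_lt m z).le)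
    linarith
  have hcm : ∀ m : ℕ, b x g + L x g (ξseq m y) = auxV b (auxTrans g (e (Nat.find (hex m y)))) x :=
    fun m => auxV_trans b L hbcoc g _ x
  have hu'tend : Tendsto (fun m => b x g + L x g (ξseq m y)) atTop
      (𝓝 (b x g + L x g (ξ y))) := by
    have hc : Continuous fun v : K => b x g + L x g v :=
      continuous_const.add (L x g).continuous
    exact (hc.tendsto _).comp (htend y)
  have hmidbound : auxR b x ≤ auxPhi b x ((2⁻¹:ℝ) • (ξ x + (b x g + L x g (ξ y)))) := by
    have hmtend : Tendsto (fun m => (2⁻¹:ℝ) • (ξseq m x + (b x g + L x g (ξseq m y))))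
        atTop (𝓝 ((2⁻¹:ℝ) • (ξ x + (b x g + L x g (ξ y))))) :=
      ((htend x).add hu'tend).const_smul _
    have hΦtend := auxPhi_tendsto b x (hbound x) hmtend
    refine ge_of_tendsto' hΦtend fun m => ?_
    have h : (2⁻¹:ℝ) • (ξseq m x + (b x g + L x g (ξseq m y)))
        = auxV b (auxMid (e (Nat.find (hex m x))) (auxTrans g (e (Nat.find (hex m y))))) x := by
      rw [auxV_mid, ← hcm m]
    rw [h]
    exact hRleΦ x _
  have hu'Φ : auxPhi b x (b x g + L x g (ξ y)) = auxR b x := by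
    rw [auxPhi_equivariant b L hbcoc x g (ξ y), ← hy, hΦR y, hy, auxR_equivariant b L hbcoc x g]
  have h0 := hkey x (ξ x) (b x g + L x g (ξ y)) hmidbound
  rw [hΦR x, hu'Φ] at h0
  have hzero : ξ x - (b x g + L x g (ξ y)) = 0 := by
    have hn : ‖ξ x - (b x g + L x g (ξ y))‖ = 0 := by
      nlinarith [norm_nonneg (ξ x - (b x g + L x g (ξ y))), h0]
    exact norm_eq_zero.mp hn
  have heq : ξ x = b x g + L x g (ξ y) := by rwa [sub_eq_zero] at hzero
  rw [heq]
  abel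

/-- Let `G` be a countable discrete group with a measurable quasi-invariant action on a
standard Borel probability space `(X, μ)`, `L` a strict representation of `X ⋊ G` on a
separable complex Hilbert space and `b` a strict `L`-cocycle such that for each `x` the set
`{ b(x,g) : g ∈ G }` is bounded. Then `b` is an `L`-coboundary. -/
theorem strict_bounded_cocycle_is_coboundary
    {G X : Type*} [Group G] [Countable G]
    [MeasurableSpace X] [StandardBorelSpace X] [MulAction G X]
    (μ : Measure X) [IsProbabilityMeasure μ] (hqi : QuasiInvariantAction G μ)
    {K : Type*} [NormedAddCommGroup K] [InnerProductSpace ℂ K]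
    [CompleteSpace K] [SecondCountableTopology K] [MeasurableSpace K] [BorelSpace K]
    (L : X → G → (K ≃ₗᵢ[ℂ] K))
    (hLmeas : ∀ (g : G) (v : K), Measurable fun x : X => L x g v)
    (hLmul : ∀ (x : X) (g₁ g₂ : G) (v : K),
      L x (g₁ * g₂) v = L x g₁ (L (g₁⁻¹ • x) g₂ v))
    (b : X → G → K)
    (hbmeas : ∀ g : G, Measurable fun x : X => b x g)
    (hbcoc : ∀ (x : X) (g₁ g₂ : G),
      b x (g₁ * g₂) = b x g₁ + L x g₁ (b (g₁⁻¹ • x) g₂))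
    (hbound : ∀ x : X, ∃ C : ℝ, ∀ g : G, ‖b x g‖ ≤ C) :
    IsLCoboundary μ L b := by
  
  obtain ⟨ξ, hm, h⟩ := strict_bounded_cocycle_is_coboundary' μ L b hbmeas hbcoc hbound
  exact ⟨ξ, hm, fun g => Filter.Eventually.of_forall (h g)⟩
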